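/- Let n ≥ 1 and let Ω ⊆ ℝⁿ be a nonempty bounded open set which has the ε-cone property for some ε ∈ (0, π/2]. Then there exist constants c₀ > 0 and ρ > 0 such that V_Ω(x,r) ≥ c₀ rⁿ for every x ∈ Ω and every r with 0 < r ≤ ρ. -/

import Mathlib

open MeasureTheory Metric Set

noncomputable section

/-- The open truncated cone with vertex `y`, direction `ξ`, aperture `ε` and length `r`:
`{z : (z−y)·ξ ≥ cos(ε)|z−y| and 0 < |z−y| < r}`. -/
def coneSet (n : ℕ) (y ξ : EuclideanSpace ℝ (Fin n)) (ε r : ℝ) :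
    Set (EuclideanSpace ℝ (Fin n)) :=
  {z | Real.cos ε * ‖z - y‖ ≤ (inner ℝ (z - y) ξ : ℝ) ∧ 0 < ‖z - y‖ ∧ ‖z - y‖ < r}

/-- `Ω` has the `ε`-cone property: for every boundary point `x` there is a unit direction
`ξ` such that for every `y ∈ closure Ω ∩ B(x,ε)` the cone `𝒞(y,ξ,ε)` is contained in `Ω`. -/
def HasConeProperty (n : ℕ) (Ω : Set (EuclideanSpace ℝ (Fin n))) (ε : ℝ) : Prop :=
  ∀ x ∈ frontier Ω, ∃ ξ : EuclideanSpace ℝ (Fin n), ‖ξ‖ = 1 ∧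
    ∀ y ∈ closure Ω ∩ ball x ε, coneSet n y ξ ε ε ⊆ Ω

/-- A ball of radius `(1-cos ε)/4 * r` centered at `x + (r/2)•ξ` sits inside the cone. -/
lemma ball_subset_coneSet (n : ℕ) (x ξ : EuclideanSpace ℝ (Fin n)) (hξ : ‖ξ‖ = 1)
    {ε r : ℝ} (hc0 : 0 ≤ Real.cos ε) (hr : 0 < r) :
    ball (x + (r / 2) • ξ) ((1 - Real.cos ε) / 4 * r) ⊆ coneSet n x ξ ε r := by
  intro z hz
  set c := Real.cos ε with hc
  set t : ℝ := r / 2 with ht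
  set s : ℝ := (1 - c) / 4 * r with hs
  have hzc : ‖z - (x + t • ξ)‖ < s := by
    rw [mem_ball, dist_eq_norm] at hz; exact hz
  have hc1 : c ≤ 1 := Real.cos_le_one ε
  have hdecomp : z - x = (z - (x + t • ξ)) + t • ξ := by abel
  have hinner : (inner ℝ (z - x) ξ : ℝ) = inner ℝ (z - (x + t • ξ)) ξ + t := by
    rw [hdecomp, inner_add_left, real_inner_smul_left, real_inner_self_eq_norm_sq, hξ]
    ring
  have habs : |(inner ℝ (z - (x + t • ξ)) ξ : ℝ)| ≤ ‖z - (x + t • ξ)‖ := by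
    have := abs_real_inner_le_norm (z - (x + t • ξ)) ξ
    simpa [hξ] using this
  have hlow : t - s < (inner ℝ (z - x) ξ : ℝ) := by
    have : -s < (inner ℝ (z - (x + t • ξ)) ξ : ℝ) := by
      have := (abs_lt.mp (lt_of_le_of_lt habs hzc)).1
      linarith
    linarith [hinner]
  have hup : ‖z - x‖ < t + s := by
    calc ‖z - x‖ = ‖(z - (x + t • ξ)) + t • ξ‖ := by rw [hdecomp]
    _ ≤ ‖z - (x + t • ξ)‖ + ‖t • ξ‖ := norm_add_le _ _
    _ = ‖z - (x + t • ξ)‖ + t := by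
        rw [norm_smul, hξ, Real.norm_eq_abs, abs_of_pos (by positivity)]; ring
    _ < t + s := by linarith
  have hinner_le : (inner ℝ (z - x) ξ : ℝ) ≤ ‖z - x‖ := by
    have := real_inner_le_norm (z - x) ξ
    simpa [hξ] using this
  have hts : s < t := by
    rw [hs, ht]; nlinarith
  refine ⟨?_, ?_, ?_⟩
  · -- cos ε * ‖z - x‖ ≤ inner
    have key : s * (1 + c) ≤ t * (1 - c) := by
      rw [hs, ht]; nlinarith
    have h1 : c * ‖z - x‖ ≤ c * (t + s) :=
      mul_le_mul_of_nonneg_left hup.le hc0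
    have h2 : c * (t + s) ≤ t - s := by nlinarith
    linarith [hlow]
  · -- 0 < ‖z - x‖
    linarith [hlow, hinner_le, hts]
  · -- ‖z - x‖ < r
    have : t + s < r := by rw [ht] at hts ⊢; linarith
    linarith

set_option maxHeartbeats 1000000 in
/-- For a nonempty bounded open set of `ℝⁿ` with the `ε`-cone property there are
`c₀ > 0` and `ρ > 0` such that `V_Ω(x,r) ≥ c₀ rⁿ` for all `x ∈ Ω` and `0 < r ≤ ρ`. -/
theorem volume_lower_bound_of_coneProperty (n : ℕ) (hn : 1 ≤ n)
    (Ω : Set (EuclideanSpace ℝ (Fin n))) (hne : Ω.Nonempty)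
    (hbd : Bornology.IsBounded Ω) (hop : IsOpen Ω)
    (ε : ℝ) (hε : ε ∈ Set.Ioc 0 (Real.pi / 2))
    (hcone : HasConeProperty n Ω ε) :
    ∃ c₀ ρ : ℝ, 0 < c₀ ∧ 0 < ρ ∧ ∀ x ∈ Ω, ∀ r : ℝ, 0 < r → r ≤ ρ →
      ENNReal.ofReal (c₀ * r ^ n) ≤ volume (Ω ∩ ball x r) := by
  obtain ⟨hε0, hεπ⟩ := hε
  haveI : Nontrivial (EuclideanSpace ℝ (Fin n)) := by
    apply Module.nontrivial_of_finrank_pos (R := ℝ)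
    rw [finrank_euclideanSpace_fin]; omega
  have hπ := Real.pi_pos
  have hcos0 : 0 ≤ Real.cos ε :=
    Real.cos_nonneg_of_mem_Icc ⟨by linarith, hεπ⟩
  have hcos1 : Real.cos ε < 1 := by
    have := Real.cos_lt_cos_of_nonneg_of_le_pi le_rfl (by linarith : ε ≤ Real.pi) hε0
    simpa using this
  set k : ℝ := (1 - Real.cos ε) / 4 with hk
  have hk0 : 0 < k := by rw [hk]; linarith
  have hk2 : k < 1 / 2 := by rw [hk]; linarith
  set B : ENNReal := volume (ball (0 : EuclideanSpace ℝ (Fin n)) 1) with hB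
  have hBpos : 0 < B := measure_ball_pos _ _ one_pos
  have hBlt : B < ⊤ := measure_ball_lt_top
  set m : ℝ := B.toReal with hm
  have hm0 : 0 < m := ENNReal.toReal_pos hBpos.ne' hBlt.ne
  have hBm : ENNReal.ofReal m = B := ENNReal.ofReal_toReal hBlt.ne
  refine ⟨k ^ n * m, ε, by positivity, hε0, ?_⟩
  intro x hx r hr hrρ
  -- it suffices to find a ball of radius `k * r` inside `Ω ∩ ball x r`
  have key : ∀ c : EuclideanSpace ℝ (Fin n), ball c (k * r) ⊆ Ω ∩ ball x r →
      ENNReal.ofReal (k ^ n * m * r ^ n) ≤ volume (Ω ∩ ball x r) := by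
    intro c hsub
    have hkr : (0:ℝ) ≤ k * r := by positivity
    have hvol : volume (ball c (k * r)) = ENNReal.ofReal ((k * r) ^ n) * B := by
      rw [Measure.addHaar_ball _ _ hkr, finrank_euclideanSpace_fin, hB]
    calc ENNReal.ofReal (k ^ n * m * r ^ n)
        = ENNReal.ofReal ((k * r) ^ n * m) := by rw [mul_pow]; ring_nf
      _ = ENNReal.ofReal ((k * r) ^ n) * ENNReal.ofReal m :=
          ENNReal.ofReal_mul (by positivity)
      _ = volume (ball c (k * r)) := by rw [hBm, hvol]
      _ ≤ volume (Ω ∩ ball x r) := measure_mono hsub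
  -- complement is nonempty since Ω is bounded
  have hcne : Ωᶜ.Nonempty := by
    rw [Set.nonempty_compl]
    intro h
    exact NormedSpace.unbounded_univ ℝ (EuclideanSpace ℝ (Fin n)) (h ▸ hbd)
  set d : ℝ := infDist x Ωᶜ with hd
  have hclosed : IsClosed Ωᶜ := hop.isClosed_compl
  have hballd : ball x d ⊆ Ω := by
    intro z hz
    by_contra hzΩ
    have h1 : d ≤ dist x z := hd ▸ infDist_le_dist_of_mem hzΩ
    have h2 : dist x z < d := by rwa [mem_ball, dist_comm] at hz
    linarith
  have hd0 : 0 < d := by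
    obtain ⟨δ, hδ0, hδ⟩ := Metric.isOpen_iff.mp hop x hx
    have hδd : δ ≤ d := by
      by_contra h
      push_neg at h
      obtain ⟨y, hyc, hy⟩ := (infDist_lt_iff hcne).mp h
      exact hyc (hδ (mem_ball'.mpr hy))
    linarith
  by_cases hcase : r / 2 ≤ d
  · -- interior case: `ball x (k*r)` fits inside `Ω`
    apply key x
    intro z hz
    rw [mem_ball] at hz
    have hzr : dist z x < r := by nlinarith
    have hzd : dist z x < d := by nlinarith
    exact ⟨hballd (mem_ball.mpr hzd), mem_ball.mpr hzr⟩
  · -- boundary case: use the cone property at a nearest boundary point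
    push_neg at hcase
    obtain ⟨p, hpc, hpd⟩ := hclosed.exists_infDist_eq_dist hcne x
    have hpfront : p ∈ frontier Ω := by
      rw [hop.frontier_eq]
      refine ⟨?_, hpc⟩
      have hpcb : p ∈ closedBall x d := by
        rw [mem_closedBall, dist_comm]
        exact hpd.ge
      have hcb : p ∈ closure (ball x d) := by
        rw [closure_ball x hd0.ne']; exact hpcb
      exact closure_mono hballd hcb
    obtain ⟨ξ, hξ1, hξ⟩ := hcone p hpfront
    have hxmem : x ∈ closure Ω ∩ ball p ε := by
      refine ⟨subset_closure hx, ?_⟩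
      rw [mem_ball, ← hpd, ← hd]
      linarith
    have hconeΩ : coneSet n x ξ ε ε ⊆ Ω := hξ x hxmem
    apply key (x + (r / 2) • ξ)
    intro z hz
    have hzc : z ∈ coneSet n x ξ ε r := ball_subset_coneSet n x ξ hξ1 hcos0 hr hz
    obtain ⟨h1, h2, h3⟩ := hzc
    refine ⟨hconeΩ ⟨h1, h2, lt_of_lt_of_le h3 hrρ⟩, ?_⟩
    rw [mem_ball, dist_eq_norm]
    exact h3
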